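/- Let (X_n)_{n≥1} and (Y_n)_{n≥1} be sequences where X_n, Y_n : T_n → [0,1] are functions on a set T_n of 'tests', with the following product property: for all m, n there is a map T_m × T_n → T_{m+n}, (S, T) ↦ S⊗T, with X_{m+n}(S⊗T) = X_m(S)·X_n(T) and Y_{m+n}(S⊗T) = Y_m(S)·Y_n(T); and a unit test 1_n ∈ T_n with X_n(1_n) = Y_n(1_n) = 1 and closure under scalar multiplication by c ∈ (0,1] with X_n(cT) = c·X_n(T), Y_n(cT) = c·Y_n(T). Fix r > 0 and define b_n = inf { −(1/n)·log X_n(T) : T ∈ T_n, Y_n(T) ≤ e^{−n r} } (with b_n = +∞ if no such T exists). Then the limit lim_{n→∞} b_n exists in [0, ∞] and equals limsup_n b_n = liminf_n b_n. -/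

import Mathlib

open Filter
open scoped ENNReal

/-- An abstract hypothesis-testing framework: for each number of copies `n` there is a set
of tests `T n`, with functionals `X n, Y n : T n → [0,1]` (the two states evaluated on
tests), a multiplicative tensor product of tests, unit tests, and rescaling of tests by
constants in `(0,1]`. -/
structure TestFramework where
  T : ℕ → Type
  X : ∀ n, T n → ℝ
  Y : ∀ n, T n → ℝ
  X_mem : ∀ n t, X n t ∈ Set.Icc (0 : ℝ) 1
  Y_mem : ∀ n t, Y n t ∈ Set.Icc (0 : ℝ) 1
  tensor : ∀ {m n}, T m → T n → T (m + n)
  X_tensor : ∀ {m n} (s : T m) (t : T n), X (m + n) (tensor s t) = X m s * X n t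
  Y_tensor : ∀ {m n} (s : T m) (t : T n), Y (m + n) (tensor s t) = Y m s * Y n t
  one : ∀ n, T n
  X_one : ∀ n, X n (one n) = 1
  Y_one : ∀ n, Y n (one n) = 1
  smul : ∀ {n}, ℝ → T n → T n
  X_smul : ∀ {n} (c : ℝ), 0 < c → c ≤ 1 → ∀ t : T n, X n (smul c t) = c * X n t
  Y_smul : ∀ {n} (c : ℝ), 0 < c → c ≤ 1 → ∀ t : T n, Y n (smul c t) = c * Y n t

/-- The value `-(1/n) log X_n(T)`, as an element of `[0, ∞]` (equal to `∞` when
`X_n(T) = 0`). -/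
noncomputable def testValue (F : TestFramework) (n : ℕ) (t : F.T n) : ℝ≥0∞ :=
  if F.X n t = 0 then ⊤ else ENNReal.ofReal (-(1 / (n : ℝ)) * Real.log (F.X n t))

/-- `b n = inf { -(1/n) log X_n(T) : Y_n(T) ≤ e^{-nr} }`, with `b n = ∞` if no test
satisfies the constraint. -/
noncomputable def bSeq (F : TestFramework) (r : ℝ) (n : ℕ) : ℝ≥0∞ :=
  sInf {z | ∃ t : F.T n, F.Y n t ≤ Real.exp (-(n : ℝ) * r) ∧ z = testValue F n t}

namespace TestFramework

def pow (F : TestFramework) (n₀ : ℕ) (t : F.T n₀) : ∀ k : ℕ, F.T (n₀ * k)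
  | 0 => F.one 0
  | k+1 => F.tensor (F.pow n₀ t k) t

lemma X_pow (F : TestFramework) (n₀ : ℕ) (t : F.T n₀) (k : ℕ) :
    F.X (n₀ * k) (F.pow n₀ t k) = (F.X n₀ t) ^ k := by
  induction k with
  | zero => simp [pow, F.X_one]
  | succ k ih =>
      show F.X (n₀ * k + n₀) (F.tensor (F.pow n₀ t k) t) = _
      rw [F.X_tensor, ih, pow_succ]

lemma Y_pow (F : TestFramework) (n₀ : ℕ) (t : F.T n₀) (k : ℕ) :
    F.Y (n₀ * k) (F.pow n₀ t k) = (F.Y n₀ t) ^ k := by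
  induction k with
  | zero => simp [pow, F.Y_one]
  | succ k ih =>
      show F.Y (n₀ * k + n₀) (F.tensor (F.pow n₀ t k) t) = _
      rw [F.Y_tensor, ih, pow_succ]

def castT (F : TestFramework) {m n : ℕ} (h : m = n) (t : F.T m) : F.T n := h ▸ t

lemma X_castT (F : TestFramework) {m n : ℕ} (h : m = n) (t : F.T m) :
    F.X n (F.castT h t) = F.X m t := by subst h; rfl

lemma Y_castT (F : TestFramework) {m n : ℕ} (h : m = n) (t : F.T m) :
    F.Y n (F.castT h t) = F.Y m t := by subst h; rfl

end TestFramework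

lemma bSeq_le_bound (F : TestFramework) (r : ℝ) (hr : 0 < r) {n₀ : ℕ} (hn₀ : 1 ≤ n₀)
    (t₀ : F.T n₀) (hY : F.Y n₀ t₀ ≤ Real.exp (-(n₀ : ℝ) * r)) {n : ℕ} (hn : 1 ≤ n) :
    bSeq F r n ≤ ENNReal.ofReal ((n₀ : ℝ) * r / n) + testValue F n₀ t₀ := by
  set k := n / n₀ with hk
  set s := n % n₀ with hs
  have hmod : n₀ * k + s = n := Nat.div_add_mod n n₀
  have hsr : 0 ≤ (s : ℝ) * r := mul_nonneg (Nat.cast_nonneg s) hr.le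
  set c : ℝ := Real.exp (-(s : ℝ) * r) with hc
  have hc0 : 0 < c := Real.exp_pos _
  have hc1 : c ≤ 1 := Real.exp_le_one_iff.mpr (by nlinarith)
  set t' : F.T n := F.castT hmod (F.smul c (F.tensor (F.pow n₀ t₀ k) (F.one s)))
  have hXt' : F.X n t' = c * (F.X n₀ t₀) ^ k := by
    rw [F.X_castT, F.X_smul c hc0 hc1, F.X_tensor, F.X_pow, F.X_one, mul_one]
  have hYt' : F.Y n t' = c * (F.Y n₀ t₀) ^ k := by
    rw [F.Y_castT, F.Y_smul c hc0 hc1, F.Y_tensor, F.Y_pow, F.Y_one, mul_one]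
  have hY0 : 0 ≤ F.Y n₀ t₀ := (F.Y_mem n₀ t₀).1
  have hYcon : F.Y n t' ≤ Real.exp (-(n : ℝ) * r) := by
    rw [hYt']
    calc c * (F.Y n₀ t₀) ^ k ≤ c * (Real.exp (-(n₀ : ℝ) * r)) ^ k := by
          exact mul_le_mul_of_nonneg_left (pow_le_pow_left₀ hY0 hY k) hc0.le
      _ = Real.exp (-(s : ℝ) * r + (k : ℝ) * (-(n₀ : ℝ) * r)) := by
          rw [← Real.exp_nat_mul, ← Real.exp_add]
      _ = Real.exp (-(n : ℝ) * r) := by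
          congr 1
          have h : ((n₀ * k + s : ℕ) : ℝ) = (n : ℝ) := by rw [hmod]
          push_cast at h
          nlinarith [h]
  have hb : bSeq F r n ≤ testValue F n t' := sInf_le ⟨t', hYcon, rfl⟩
  refine hb.trans ?_
  by_cases hX0 : F.X n₀ t₀ = 0
  · simp [testValue, hX0]
  · have hXpos : 0 < F.X n₀ t₀ := lt_of_le_of_ne (F.X_mem n₀ t₀).1 (Ne.symm hX0)
    have hXle1 : F.X n₀ t₀ ≤ 1 := (F.X_mem n₀ t₀).2
    have hXt'pos : 0 < F.X n t' := by rw [hXt']; positivity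
    have hlog : Real.log (F.X n t') = -(s : ℝ) * r + (k : ℝ) * Real.log (F.X n₀ t₀) := by
      rw [hXt', Real.log_mul hc0.ne' (pow_ne_zero k hX0), Real.log_pow, hc, Real.log_exp]
    rw [testValue, if_neg hXt'pos.ne', testValue, if_neg hX0]
    have hn0R : (0 : ℝ) < n := by exact_mod_cast hn
    have hn₀R : (0 : ℝ) < n₀ := by exact_mod_cast hn₀
    have hlogX : Real.log (F.X n₀ t₀) ≤ 0 := Real.log_nonpos hXpos.le hXle1
    have hkn : (k : ℝ) * n₀ ≤ n := by
      have h : n₀ * k ≤ n := Nat.le.intro hmod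
      calc (k : ℝ) * n₀ = ((n₀ * k : ℕ) : ℝ) := by push_cast; ring
        _ ≤ n := by exact_mod_cast h
    have hsn₀ : (s : ℝ) ≤ n₀ := by
      have : s < n₀ := Nat.mod_lt n hn₀
      exact_mod_cast this.le
    have key : -(1 / (n : ℝ)) * Real.log (F.X n t')
        ≤ (n₀ : ℝ) * r / n + -(1 / (n₀ : ℝ)) * Real.log (F.X n₀ t₀) := by
      rw [hlog]
      have h1 : (s : ℝ) * r / n ≤ (n₀ : ℝ) * r / n := by
        gcongr
      have h2 : (k : ℝ) * (-Real.log (F.X n₀ t₀)) / n ≤ (-Real.log (F.X n₀ t₀)) / n₀ := by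
        rw [div_le_div_iff₀ hn0R hn₀R]
        have hA : 0 ≤ -Real.log (F.X n₀ t₀) := by linarith
        nlinarith [mul_le_mul_of_nonneg_left hkn hA]
      have e1 : -(1 / (n : ℝ)) * (-(s : ℝ) * r + (k : ℝ) * Real.log (F.X n₀ t₀))
          = (s : ℝ) * r / n + (k : ℝ) * (-Real.log (F.X n₀ t₀)) / n := by ring
      have e2 : -(1 / (n₀ : ℝ)) * Real.log (F.X n₀ t₀) = (-Real.log (F.X n₀ t₀)) / n₀ := by ring
      rw [e1, e2]; linarith
    calc ENNReal.ofReal (-(1 / (n : ℝ)) * Real.log (F.X n t'))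
        ≤ ENNReal.ofReal ((n₀ : ℝ) * r / n + -(1 / (n₀ : ℝ)) * Real.log (F.X n₀ t₀)) :=
          ENNReal.ofReal_le_ofReal key
      _ ≤ _ := ENNReal.ofReal_add_le


/-- Existence of the limit defining the strong converse exponent: for `r > 0`, the
sequence `b n` converges in `[0, ∞]` and its limit equals both its limsup and liminf. -/
theorem bSeq_limit_exists (F : TestFramework) (r : ℝ) (hr : 0 < r) :
    limsup (bSeq F r) atTop = liminf (bSeq F r) atTop ∧
      Tendsto (bSeq F r) atTop (nhds (limsup (bSeq F r) atTop)) := by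
  have key : ∀ n₀ : ℕ, 1 ≤ n₀ → limsup (bSeq F r) atTop ≤ bSeq F r n₀ := by
    intro n₀ hn₀
    rw [bSeq]
    apply le_sInf
    rintro z ⟨t₀, hY, rfl⟩
    have hbd : ∀ᶠ n in atTop, bSeq F r n
        ≤ ENNReal.ofReal ((n₀ : ℝ) * r / n) + testValue F n₀ t₀ := by
      filter_upwards [eventually_ge_atTop 1] with n hn
      exact bSeq_le_bound F r hr hn₀ t₀ hY hn
    have htend : Tendsto (fun n : ℕ => ENNReal.ofReal ((n₀ : ℝ) * r / n) + testValue F n₀ t₀)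
        atTop (nhds (testValue F n₀ t₀)) := by
      have h0 : Tendsto (fun n : ℕ => ENNReal.ofReal ((n₀ : ℝ) * r / n)) atTop (nhds 0) := by
        have := tendsto_const_div_atTop_nhds_zero_nat ((n₀ : ℝ) * r)
        have := (ENNReal.continuous_ofReal.tendsto 0).comp this
        simpa [Function.comp_def] using this
      simpa using h0.add (tendsto_const_nhds (x := testValue F n₀ t₀))
    calc limsup (bSeq F r) atTop
        ≤ limsup (fun n : ℕ => ENNReal.ofReal ((n₀ : ℝ) * r / n) + testValue F n₀ t₀) atTop :=
          limsup_le_limsup hbd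
      _ = testValue F n₀ t₀ := htend.limsup_eq
  have hle : limsup (bSeq F r) atTop ≤ liminf (bSeq F r) atTop := by
    refine le_liminf_of_le (by isBoundedDefault) ?_
    filter_upwards [eventually_ge_atTop 1] with n hn using key n hn
  have heq : limsup (bSeq F r) atTop = liminf (bSeq F r) atTop :=
    le_antisymm hle liminf_le_limsup
  exact ⟨heq, tendsto_of_liminf_eq_limsup heq.symm rfl⟩
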